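/- Let R_x, R_y be positive semidefinite n×n matrices and R_xy an n×n matrix such that for every α > 0, the matrix R_x − R_xy (R_y + αI)^{-1} R_xy^T is positive semidefinite. Then ||R_xy||² ≤ ||R_x|| · ||R_y|| (spectral norms). -/

import Mathlib

open Matrix
open scoped Matrix.Norms.L2Operator

private lemma euc_norm_sq {n : ℕ} (v : Fin n → ℝ) :
    ‖(EuclideanSpace.equiv (Fin n) ℝ).symm v‖ ^ 2 = v ⬝ᵥ v := by
  rw [EuclideanSpace.norm_eq, Real.sq_sqrt (by positivity)]
  simp [dotProduct, sq_abs, sq]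

private lemma euc_inner_eq {n : ℕ} (v w : Fin n → ℝ) :
    v ⬝ᵥ w = inner ℝ ((EuclideanSpace.equiv (Fin n) ℝ).symm v)
      ((EuclideanSpace.equiv (Fin n) ℝ).symm w) := by
  simp [PiLp.inner_apply, dotProduct, RCLike.inner_apply, mul_comm]

/-- Quadratic form bound: `u ⬝ᵥ A u ≤ ‖A‖ (u ⬝ᵥ u)`. -/
private lemma quad_le_norm {n : ℕ} (A : Matrix (Fin n) (Fin n) ℝ) (u : Fin n → ℝ) :
    u ⬝ᵥ (A *ᵥ u) ≤ ‖A‖ * (u ⬝ᵥ u) := by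
  set eu := (EuclideanSpace.equiv (Fin n) ℝ).symm u with heu
  have h1 : u ⬝ᵥ (A *ᵥ u) = inner ℝ eu ((EuclideanSpace.equiv (Fin n) ℝ).symm (A *ᵥ u)) :=
    euc_inner_eq u (A *ᵥ u)
  have h2 : (inner ℝ eu ((EuclideanSpace.equiv (Fin n) ℝ).symm (A *ᵥ u)) : ℝ)
      ≤ ‖eu‖ * ‖(EuclideanSpace.equiv (Fin n) ℝ).symm (A *ᵥ u)‖ := real_inner_le_norm _ _
  have h3 : ‖(EuclideanSpace.equiv (Fin n) ℝ).symm (A *ᵥ u)‖ ≤ ‖A‖ * ‖eu‖ :=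
    A.l2_opNorm_mulVec eu
  have h4 : u ⬝ᵥ u = ‖eu‖ ^ 2 := (euc_norm_sq u).symm
  calc u ⬝ᵥ (A *ᵥ u) = _ := h1
    _ ≤ ‖eu‖ * ‖(EuclideanSpace.equiv (Fin n) ℝ).symm (A *ᵥ u)‖ := h2
    _ ≤ ‖eu‖ * (‖A‖ * ‖eu‖) := mul_le_mul_of_nonneg_left h3 (norm_nonneg _)
    _ = ‖A‖ * ‖eu‖ ^ 2 := by ring
    _ = ‖A‖ * (u ⬝ᵥ u) := by rw [h4]

/-- Operator norm bound from a pointwise bound on `mulVec`. -/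
private lemma opNorm_le_of_mulVec {n : ℕ} (A : Matrix (Fin n) (Fin n) ℝ) {c : ℝ} (hc : 0 ≤ c)
    (h : ∀ u : Fin n → ℝ, ‖(EuclideanSpace.equiv (Fin n) ℝ).symm (A *ᵥ u)‖
      ≤ c * ‖(EuclideanSpace.equiv (Fin n) ℝ).symm u‖) : ‖A‖ ≤ c := by
  rw [Matrix.l2_opNorm_def]
  refine ContinuousLinearMap.opNorm_le_bound _ hc fun v => ?_
  have hv : v = (EuclideanSpace.equiv (Fin n) ℝ).symm (WithLp.equiv 2 (Fin n → ℝ) v) := rfl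
  calc ‖(Matrix.toEuclideanLin.trans LinearMap.toContinuousLinearMap A) v‖
      = ‖(EuclideanSpace.equiv (Fin n) ℝ).symm (A *ᵥ (WithLp.equiv 2 (Fin n → ℝ) v))‖ := rfl
    _ ≤ c * ‖(EuclideanSpace.equiv (Fin n) ℝ).symm (WithLp.equiv 2 (Fin n → ℝ) v)‖ := h _
    _ = c * ‖v‖ := by rw [← hv]

open scoped MatrixOrder in
private lemma exists_psd_sqrt {n : ℕ} (M : Matrix (Fin n) (Fin n) ℝ) (hM : M.PosSemidef) :
    ∃ S : Matrix (Fin n) (Fin n) ℝ, S.PosSemidef ∧ S * S = M := by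
  have h0 : (0 : Matrix (Fin n) (Fin n) ℝ) ≤ M := Matrix.nonneg_iff_posSemidef.mpr hM
  have h1 : (0 : Matrix (Fin n) (Fin n) ℝ) ≤ CFC.sqrt M := CFC.sqrt_nonneg M
  exact ⟨CFC.sqrt M, Matrix.nonneg_iff_posSemidef.mp h1, CFC.sqrt_mul_sqrt_self M h0⟩

/-- For a positive definite `M` and any `x`, `x ⬝ᵥ x ≤ ‖M‖ * (x ⬝ᵥ M⁻¹ x)`. -/
private lemma key_inv {n : ℕ} {M : Matrix (Fin n) (Fin n) ℝ} (hM : M.PosDef)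
    (x : Fin n → ℝ) : x ⬝ᵥ x ≤ ‖M‖ * (x ⬝ᵥ (M⁻¹ *ᵥ x)) := by
  obtain ⟨S, hS, hSS⟩ : ∃ S : Matrix (Fin n) (Fin n) ℝ, S.PosSemidef ∧ S * S = M :=
    exists_psd_sqrt M hM.posSemidef
  have hSt : Sᵀ = S := by
    have := hS.1
    rw [Matrix.IsHermitian] at this
    simpa using this
  set y := M⁻¹ *ᵥ x with hy
  have hMy : M *ᵥ y = x := by
    rw [hy, mulVec_mulVec, Matrix.mul_nonsing_inv M (isUnit_iff_isUnit_det M |>.mp hM.isUnit),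
      one_mulVec]
  have hxSS : S *ᵥ (S *ᵥ y) = x := by rw [mulVec_mulVec, hSS, hMy]
  -- ‖S‖ ^ 2 = ‖M‖
  have hnormS : ‖M‖ = ‖S‖ * ‖S‖ := by
    have := S.l2_opNorm_conjTranspose_mul_self
    rw [hS.1, hSS] at this
    exact this
  -- (S y) ⬝ᵥ (S y) = x ⬝ᵥ y
  have hdot : (S *ᵥ y) ⬝ᵥ (S *ᵥ y) = x ⬝ᵥ y := by
    rw [dotProduct_mulVec (S *ᵥ y) S y]
    congr 1
    rw [← Matrix.mulVec_transpose, hSt, mulVec_mulVec, hSS, hMy]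
  have hb : ‖(EuclideanSpace.equiv (Fin n) ℝ).symm (S *ᵥ (S *ᵥ y))‖
      ≤ ‖S‖ * ‖(EuclideanSpace.equiv (Fin n) ℝ).symm (S *ᵥ y)‖ :=
    S.l2_opNorm_mulVec ((EuclideanSpace.equiv (Fin n) ℝ).symm (S *ᵥ y))
  have h1 : x ⬝ᵥ x = ‖(EuclideanSpace.equiv (Fin n) ℝ).symm (S *ᵥ (S *ᵥ y))‖ ^ 2 := by
    rw [euc_norm_sq, hxSS]
  have h2 : ‖(EuclideanSpace.equiv (Fin n) ℝ).symm (S *ᵥ y)‖ ^ 2 = x ⬝ᵥ y := by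
    rw [euc_norm_sq, hdot]
  have hx0 : (0:ℝ) ≤ ‖(EuclideanSpace.equiv (Fin n) ℝ).symm (S *ᵥ (S *ᵥ y))‖ := norm_nonneg _
  have hs0 : (0:ℝ) ≤ ‖S‖ := norm_nonneg _
  have hsy0 : (0:ℝ) ≤ ‖(EuclideanSpace.equiv (Fin n) ℝ).symm (S *ᵥ y)‖ := norm_nonneg _
  nlinarith

private lemma smul_one_posDef {n : ℕ} {α : ℝ} (hα : 0 < α) :
    (α • (1 : Matrix (Fin n) (Fin n) ℝ)).PosDef := by
  have : (α • (1 : Matrix (Fin n) (Fin n) ℝ)) = Matrix.diagonal (fun _ => α) := by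
    ext i j
    by_cases hij : i = j <;> simp [Matrix.one_apply, Matrix.diagonal, hij]
  rw [this]
  exact Matrix.PosDef.diagonal fun _ => hα

/-- Limiting step of the matrix Cauchy–Schwarz proof: if
`Rx − Rxy (Ry + αI)⁻¹ Rxyᵀ ⪰ 0` for all `α > 0`, then `‖Rxy‖² ≤ ‖Rx‖ ‖Ry‖`. -/
theorem stmt18 {n : ℕ} (Rx Ry Rxy : Matrix (Fin n) (Fin n) ℝ)
    (hx : Rx.PosSemidef) (hy : Ry.PosSemidef)
    (h : ∀ α : ℝ, 0 < α →
      (Rx - Rxy * (Ry + α • (1 : Matrix (Fin n) (Fin n) ℝ))⁻¹ * Rxyᵀ).PosSemidef) :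
    ‖Rxy‖ ^ 2 ≤ ‖Rx‖ * ‖Ry‖ := by
  -- Step 1: for every α > 0, ‖Rxy‖ ^ 2 ≤ ‖Rx‖ * ‖Ry + α • 1‖
  have main : ∀ α : ℝ, 0 < α → ‖Rxy‖ ^ 2 ≤ ‖Rx‖ * ‖Ry + α • (1 : Matrix (Fin n) (Fin n) ℝ)‖ := by
    intro α hα
    set M := Ry + α • (1 : Matrix (Fin n) (Fin n) ℝ) with hMdef
    have hM : M.PosDef := Matrix.PosDef.posSemidef_add hy (smul_one_posDef hα)
    have hnn : (0:ℝ) ≤ ‖Rx‖ * ‖M‖ := mul_nonneg (norm_nonneg _) (norm_nonneg _)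
    -- pointwise bound on Rxyᵀ *ᵥ u
    have hpt : ∀ u : Fin n → ℝ,
        (Rxyᵀ *ᵥ u) ⬝ᵥ (Rxyᵀ *ᵥ u) ≤ ‖M‖ * ‖Rx‖ * (u ⬝ᵥ u) := by
      intro u
      set x := Rxyᵀ *ᵥ u with hxdef
      have h1 : x ⬝ᵥ x ≤ ‖M‖ * (x ⬝ᵥ (M⁻¹ *ᵥ x)) := key_inv hM x
      have h2 : x ⬝ᵥ (M⁻¹ *ᵥ x) = u ⬝ᵥ ((Rxy * M⁻¹ * Rxyᵀ) *ᵥ u) := by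
        rw [hxdef, ← mulVec_mulVec, ← mulVec_mulVec, dotProduct_mulVec u Rxy,
          ← Matrix.mulVec_transpose]
      have h3 : u ⬝ᵥ ((Rxy * M⁻¹ * Rxyᵀ) *ᵥ u) ≤ u ⬝ᵥ (Rx *ᵥ u) := by
        have := (h α hα).dotProduct_mulVec_nonneg u
        simp only [star_trivial, Matrix.sub_mulVec, dotProduct_sub] at this
        linarith
      have h4 : u ⬝ᵥ (Rx *ᵥ u) ≤ ‖Rx‖ * (u ⬝ᵥ u) := quad_le_norm Rx u
      have hM0 : (0:ℝ) ≤ ‖M‖ := norm_nonneg _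
      calc x ⬝ᵥ x ≤ ‖M‖ * (x ⬝ᵥ (M⁻¹ *ᵥ x)) := h1
        _ = ‖M‖ * (u ⬝ᵥ ((Rxy * M⁻¹ * Rxyᵀ) *ᵥ u)) := by rw [h2]
        _ ≤ ‖M‖ * (‖Rx‖ * (u ⬝ᵥ u)) := by
            exact mul_le_mul_of_nonneg_left (le_trans h3 h4) hM0
        _ = ‖M‖ * ‖Rx‖ * (u ⬝ᵥ u) := by ring
    -- convert to an operator norm bound on Rxyᵀ
    have hT : ‖Rxyᵀ‖ ≤ Real.sqrt (‖M‖ * ‖Rx‖) := by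
      refine opNorm_le_of_mulVec _ (Real.sqrt_nonneg _) fun u => ?_
      have h1 := hpt u
      rw [← euc_norm_sq, ← euc_norm_sq] at h1
      have h2 : ‖(EuclideanSpace.equiv (Fin n) ℝ).symm (Rxyᵀ *ᵥ u)‖ ^ 2
          ≤ (Real.sqrt (‖M‖ * ‖Rx‖) * ‖(EuclideanSpace.equiv (Fin n) ℝ).symm u‖) ^ 2 := by
        rw [mul_pow, Real.sq_sqrt (mul_nonneg (norm_nonneg _) (norm_nonneg _))]
        exact h1
      calc ‖(EuclideanSpace.equiv (Fin n) ℝ).symm (Rxyᵀ *ᵥ u)‖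
          = Real.sqrt (‖(EuclideanSpace.equiv (Fin n) ℝ).symm (Rxyᵀ *ᵥ u)‖ ^ 2) :=
            (Real.sqrt_sq (norm_nonneg _)).symm
        _ ≤ Real.sqrt ((Real.sqrt (‖M‖ * ‖Rx‖) * ‖(EuclideanSpace.equiv (Fin n) ℝ).symm u‖) ^ 2) :=
            Real.sqrt_le_sqrt h2
        _ = Real.sqrt (‖M‖ * ‖Rx‖) * ‖(EuclideanSpace.equiv (Fin n) ℝ).symm u‖ :=
            Real.sqrt_sq (by positivity)
    -- conclude
    have hTeq : ‖Rxyᵀ‖ = ‖Rxy‖ := by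
      have hct : Rxyᴴ = Rxyᵀ := by ext i j; simp
      rw [← hct, Rxy.l2_opNorm_conjTranspose]
    rw [← hTeq]
    calc ‖Rxyᵀ‖ ^ 2 ≤ Real.sqrt (‖M‖ * ‖Rx‖) ^ 2 :=
          pow_le_pow_left₀ (norm_nonneg _) hT 2
      _ = ‖M‖ * ‖Rx‖ := Real.sq_sqrt (by positivity)
      _ = ‖Rx‖ * ‖M‖ := mul_comm _ _
  -- Step 2: ‖Ry + α • 1‖ ≤ ‖Ry‖ + α
  have hone : ‖(1 : Matrix (Fin n) (Fin n) ℝ)‖ ≤ 1 := by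
    refine opNorm_le_of_mulVec _ zero_le_one fun u => ?_
    simp [Matrix.one_mulVec]
  have hMle : ∀ α : ℝ, 0 < α → ‖Ry + α • (1 : Matrix (Fin n) (Fin n) ℝ)‖ ≤ ‖Ry‖ + α := by
    intro α hα
    calc ‖Ry + α • (1 : Matrix (Fin n) (Fin n) ℝ)‖
        ≤ ‖Ry‖ + ‖α • (1 : Matrix (Fin n) (Fin n) ℝ)‖ := norm_add_le _ _
      _ ≤ ‖Ry‖ + α := by
          rw [norm_smul, Real.norm_eq_abs, abs_of_pos hα]
          nlinarith
  -- Step 3: take the limit α → 0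
  refine le_of_forall_pos_le_add fun ε hε => ?_
  rcases eq_or_lt_of_le (norm_nonneg Rx) with hRx | hRx
  · have h0 := main 1 one_pos
    rw [← hRx, zero_mul] at h0
    rw [← hRx, zero_mul, zero_add]
    linarith
  · have hα : 0 < ε / ‖Rx‖ := div_pos hε hRx
    calc ‖Rxy‖ ^ 2 ≤ ‖Rx‖ * ‖Ry + (ε / ‖Rx‖) • (1 : Matrix (Fin n) (Fin n) ℝ)‖ :=
          main _ hα
      _ ≤ ‖Rx‖ * (‖Ry‖ + ε / ‖Rx‖) :=
          mul_le_mul_of_nonneg_left (hMle _ hα) (norm_nonneg _)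
      _ = ‖Rx‖ * ‖Ry‖ + ε := by field_simp
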